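/- Let λ > 0 and let Ω ⊂ ℝ² be a bounded open set with Lebesgue area 1. Then the infimum of E_λ(μ) over admissible atomic measures μ on Ω_λ equals the infimum of F_λ(𝝌) over finite measurable partitions 𝝌 of Ω_λ; that is, inf_μ E_λ(μ) = inf_𝝌 Σ_{i=1}^{n} [ 2·c₆·(∫_{Ω_λ} χ_i dx)^{1/2} + inf_{ξ ∈ Ω_λ} ∫_{Ω_λ} |x − ξ|²·χ_i(x) dx ]. -/

import Mathlib

open MeasureTheory Real Filter
open scoped ENNReal RealInnerProductSpace Pointwise

noncomputable section

/-- The plane `ℝ²`. -/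
abbrev Plane := EuclideanSpace ℝ (Fin 2)

/-- The point `(a, b)` of the plane. -/
def mk2 (a b : ℝ) : Plane := (WithLp.equiv 2 (Fin 2 → ℝ)).symm ![a, b]

/-- The constant `c₆ = 5√3/54`. -/
def c6 : ℝ := 5 * Real.sqrt 3 / 54

/-- The volume `V_λ = (2c₆/λ)^(2/3)` of the scaled domain. -/
def Vlam (lam : ℝ) : ℝ := (2 * c6 / lam) ^ ((2 : ℝ) / 3)

/-- The scaled domain `Ω_λ = V_λ^(1/2)·Ω`. -/
def scaledDomain (lam : ℝ) (Omega : Set Plane) : Set Plane :=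
  (fun x : Plane => Real.sqrt (Vlam lam) • x) '' Omega

/-- An admissible atomic measure on `Ω_λ`, encoded by its finite support `Z ⊆ Ω_λ` and
its weights `v`, which are positive on `Z` and of total mass `V_λ`. -/
def Admissible (lam : ℝ) (Omlam : Set Plane) (Z : Finset Plane) (v : Plane → ℝ) : Prop :=
  (↑Z : Set Plane) ⊆ Omlam ∧ (∀ z ∈ Z, 0 < v z) ∧ ∑ z ∈ Z, v z = Vlam lam

/-- A transport map between the Lebesgue measure on `Ω_λ` and the atomic measure `(Z, v)`:
a measurable map `T : Ω_λ → Z` with `|T⁻¹({z})| = v z` for all `z ∈ Z`. -/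
def IsTransportMap (Omlam : Set Plane) (Z : Finset Plane) (v : Plane → ℝ)
    (T : Plane → Plane) : Prop :=
  Measurable T ∧ (∀ x ∈ Omlam, T x ∈ Z) ∧
    ∀ z ∈ Z, (volume {x | x ∈ Omlam ∧ T x = z}).toReal = v z

/-- The quadratic optimal transport cost `W(L_{Ω_λ}, μ)`. -/
def transportCost (Omlam : Set Plane) (Z : Finset Plane) (v : Plane → ℝ) : ℝ :=
  sInf {c : ℝ | ∃ T : Plane → Plane, IsTransportMap Omlam Z v T ∧
    c = ∫ x in Omlam, ‖x - T x‖ ^ 2}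

/-- The energy `E_λ(μ) = 2c₆ Σ_z v_z^(1/2) + W(L_{Ω_λ}, μ)`. -/
def energy (Omlam : Set Plane) (Z : Finset Plane) (v : Plane → ℝ) : ℝ :=
  2 * c6 * ∑ z ∈ Z, Real.sqrt (v z) + transportCost Omlam Z v

/-- A convex polygon with at most `n` sides: a compact set with nonempty interior which is an
intersection of at most `n` closed half-planes. -/
def IsConvexPolygon (P : Set Plane) (n : ℕ) : Prop :=
  IsCompact P ∧ (interior P).Nonempty ∧
    ∃ H : Finset (Plane × ℝ), H.card ≤ n ∧ (∀ h ∈ H, h.1 ≠ 0) ∧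
      P = {x : Plane | ∀ h ∈ H, ⟪h.1, x⟫ ≤ h.2}

/-- The infimum of the energy `E_λ` over admissible atomic measures on `Ω_λ`. -/
def infEnergy (lam : ℝ) (Omlam : Set Plane) : ℝ :=
  sInf {e : ℝ | ∃ (Z : Finset Plane) (v : Plane → ℝ),
    Admissible lam Omlam Z v ∧ e = energy Omlam Z v}




lemma c6_pos : 0 < c6 := by
  have : 0 < Real.sqrt 3 := Real.sqrt_pos.2 (by norm_num)
  unfold c6; positivity

lemma Vlam_pos {lam : ℝ} (h : 0 < lam) : 0 < Vlam lam :=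
  Real.rpow_pos_of_pos (by have := c6_pos; positivity) _

lemma scaledDomain_eq (lam : ℝ) (Omega : Set Plane) :
    scaledDomain lam Omega = Real.sqrt (Vlam lam) • Omega := by
  rw [scaledDomain]
  ext y
  simp [Set.mem_smul_set]

lemma volume_scaledDomain {lam : ℝ} (hlam : 0 < lam) {Omega : Set Plane}
    (harea : volume Omega = 1) :
    volume (scaledDomain lam Omega) = ENNReal.ofReal (Vlam lam) := by
  have h0 : 0 < Vlam lam := Vlam_pos hlam
  rw [scaledDomain_eq, Measure.addHaar_smul, finrank_euclideanSpace_fin, harea, mul_one]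
  congr 1
  rw [abs_of_nonneg (by positivity), Real.sq_sqrt h0.le]

lemma isOpen_scaledDomain {lam : ℝ} (hlam : 0 < lam) {Omega : Set Plane}
    (hopen : IsOpen Omega) : IsOpen (scaledDomain lam Omega) := by
  rw [scaledDomain_eq]
  exact hopen.smul₀ (ne_of_gt (Real.sqrt_pos.2 (Vlam_pos hlam)))

lemma abs_coord_le_norm (x : Plane) (i : Fin 2) : |x i| ≤ ‖x‖ := by
  rw [EuclideanSpace.norm_eq]
  rw [← Real.sqrt_sq_eq_abs]
  apply Real.sqrt_le_sqrt
  simp only [Real.norm_eq_abs, sq_abs]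
  exact Finset.single_le_sum (f := fun j => x j ^ 2) (fun j _ => sq_nonneg _) (Finset.mem_univ i)

lemma sqrt_add_le' {a b : ℝ} (ha : 0 ≤ a) (hb : 0 ≤ b) :
    Real.sqrt (a + b) ≤ Real.sqrt a + Real.sqrt b := by
  have h : a + b ≤ (Real.sqrt a + Real.sqrt b) ^ 2 := by
    nlinarith [Real.sq_sqrt ha, Real.sq_sqrt hb, Real.sqrt_nonneg a, Real.sqrt_nonneg b]
  calc Real.sqrt (a + b) ≤ Real.sqrt ((Real.sqrt a + Real.sqrt b) ^ 2) := Real.sqrt_le_sqrt h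
    _ = Real.sqrt a + Real.sqrt b := Real.sqrt_sq (by positivity)

lemma sqrt_sum_le {ι : Type*} (s : Finset ι) (f : ι → ℝ) (hf : ∀ i ∈ s, 0 ≤ f i) :
    Real.sqrt (∑ i ∈ s, f i) ≤ ∑ i ∈ s, Real.sqrt (f i) := by
  induction s using Finset.cons_induction with
  | empty => simp
  | cons a s ha ih =>
    rw [Finset.sum_cons, Finset.sum_cons]
    have h1 : 0 ≤ f a := hf a (Finset.mem_cons_self a s)
    have h2 : 0 ≤ ∑ i ∈ s, f i := Finset.sum_nonneg fun i hi => hf i (Finset.mem_cons_of_mem hi)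
    calc Real.sqrt (f a + ∑ i ∈ s, f i) ≤ Real.sqrt (f a) + Real.sqrt (∑ i ∈ s, f i) :=
          sqrt_add_le' h1 h2
      _ ≤ _ := by
          gcongr
          exact ih fun i hi => hf i (Finset.mem_cons_of_mem hi)

lemma integrableOn_q (xi : Plane) {s : Set Plane} (hms : MeasurableSet s) (hs : volume s ≠ ⊤)
    {R : ℝ} (hsub : s ⊆ Metric.closedBall 0 R) :
    IntegrableOn (fun x => ‖x - xi‖ ^ 2) s := by
  refine Measure.integrableOn_of_bounded (M := (R + ‖xi‖) ^ 2) hs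
    (((continuous_id.sub continuous_const).norm.pow 2).aestronglyMeasurable) ?_
  filter_upwards [ae_restrict_mem hms] with x hx
  · have hxR : ‖x‖ ≤ R := by
      have := hsub hx
      rwa [Metric.mem_closedBall, dist_zero_right] at this
    have h1 : ‖x - xi‖ ≤ R + ‖xi‖ := by
      calc ‖x - xi‖ ≤ ‖x‖ + ‖xi‖ := norm_sub_le x xi
        _ ≤ R + ‖xi‖ := by gcongr
    have h2 : (0:ℝ) ≤ ‖x - xi‖ := norm_nonneg _
    rw [Real.norm_eq_abs, abs_of_nonneg (by positivity)]
    nlinarith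


lemma measurable_coord (i : Fin 2) : Measurable (fun x : Plane => x i) :=
  (EuclideanSpace.proj i).continuous.measurable

lemma volume_box (t s R : ℝ) :
    volume {x : Plane | x 0 ∈ Set.Ico t s ∧ x 1 ∈ Set.Icc (-R) R} =
      ENNReal.ofReal (s - t) * ENNReal.ofReal (2 * R) := by
  have hψ := EuclideanSpace.volume_preserving_symm_measurableEquiv_toLp (ι := Fin 2)
  set I : Fin 2 → Set ℝ := ![Set.Ico t s, Set.Icc (-R) R] with hI
  have hset : {x : Plane | x 0 ∈ Set.Ico t s ∧ x 1 ∈ Set.Icc (-R) R} =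
      ⇑(MeasurableEquiv.toLp 2 (Fin 2 → ℝ)).symm ⁻¹' (Set.univ.pi I) := by
    ext x
    simp only [Set.mem_preimage, Set.mem_univ_pi, Set.mem_setOf_eq]
    constructor
    · rintro ⟨h0, h1⟩ i
      fin_cases i <;> simpa [hI]
    · intro h
      exact ⟨by simpa [hI] using h 0,
             by simpa [hI] using h 1⟩
  rw [hset, hψ.measure_preimage]
  · rw [volume_pi_pi]
    rw [Fin.prod_univ_two]
    simp only [hI, Matrix.cons_val_zero, Matrix.cons_val_one, Matrix.head_cons,
      Real.volume_Ico, Real.volume_Icc]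
    congr 2
    ring
  · refine (MeasurableSet.univ_pi fun i => ?_).nullMeasurableSet
    fin_cases i
    · exact measurableSet_Ico
    · exact measurableSet_Icc

lemma abs_coord_le_norm' (x : Plane) (i : Fin 2) : |x i| ≤ ‖x‖ := by
  rw [EuclideanSpace.norm_eq, ← Real.sqrt_sq_eq_abs]
  apply Real.sqrt_le_sqrt
  simp only [Real.norm_eq_abs, sq_abs]
  exact Finset.single_le_sum (f := fun j => x j ^ 2) (fun j _ => sq_nonneg _) (Finset.mem_univ i)

lemma exists_subset_volume_eq {S : Set Plane} (hms : MeasurableSet S) {R : ℝ} (hR : 0 ≤ R)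
    (hsub : S ⊆ Metric.closedBall 0 R) {c : ℝ} (hc0 : 0 ≤ c) (hc1 : c ≤ (volume S).toReal) :
    ∃ U : Set Plane, MeasurableSet U ∧ U ⊆ S ∧ volume U = ENNReal.ofReal c := by
  have hfinS : volume S ≠ ⊤ := by
    refine ne_top_of_le_ne_top ?_ (measure_mono hsub)
    exact (MeasureTheory.measure_closedBall_lt_top).ne
  have hmt : ∀ t : ℝ, MeasurableSet {x : Plane | x 0 < t} :=
    fun t => measurableSet_lt (measurable_coord 0) measurable_const
  set g : ℝ → ℝ := fun t => (volume (S ∩ {x : Plane | x 0 < t})).toReal with hg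
  have hfin : ∀ t, volume (S ∩ {x : Plane | x 0 < t}) ≠ ⊤ :=
    fun t => ne_top_of_le_ne_top hfinS (measure_mono Set.inter_subset_left)
  have hmono : Monotone g := by
    intro t s hts
    exact ENNReal.toReal_mono (hfin s)
      (measure_mono (Set.inter_subset_inter_right _ (fun x hx => lt_of_lt_of_le hx hts)))
  have hlip : ∀ t s : ℝ, t ≤ s → g s ≤ g t + (s - t) * (2 * R) := by
    intro t s hts
    have hsubset : S ∩ {x : Plane | x 0 < s} ⊆
        (S ∩ {x : Plane | x 0 < t}) ∪ {x : Plane | x 0 ∈ Set.Ico t s ∧ x 1 ∈ Set.Icc (-R) R} := by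
      rintro x ⟨hxS, hxs⟩
      by_cases hxt : x 0 < t
      · exact Or.inl ⟨hxS, hxt⟩
      · refine Or.inr ⟨⟨not_lt.1 hxt, hxs⟩, ?_⟩
        have h1 : |x 1| ≤ R := le_trans (abs_coord_le_norm' x 1)
          (by have := hsub hxS; rwa [Metric.mem_closedBall, dist_zero_right] at this)
        exact abs_le.1 h1
    have h2 := (measure_mono (μ := (volume : Measure Plane)) hsubset).trans (measure_union_le _ _)
    have h3 : volume {x : Plane | x 0 ∈ Set.Ico t s ∧ x 1 ∈ Set.Icc (-R) R} =
        ENNReal.ofReal ((s - t) * (2 * R)) := by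
      rw [volume_box, ← ENNReal.ofReal_mul (by linarith)]
    rw [h3] at h2
    calc g s ≤ (volume (S ∩ {x : Plane | x 0 < t}) + ENNReal.ofReal ((s - t) * (2 * R))).toReal :=
          ENNReal.toReal_mono (ENNReal.add_ne_top.2 ⟨hfin t, ENNReal.ofReal_ne_top⟩) h2
      _ = g t + (s - t) * (2 * R) := by
          rw [ENNReal.toReal_add (hfin t) ENNReal.ofReal_ne_top, ENNReal.toReal_ofReal
            (mul_nonneg (by linarith) (by linarith))]
  have hcont : Continuous g := by
    have : LipschitzWith (Real.toNNReal (2 * R)) g := by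
      rw [lipschitzWith_iff_dist_le_mul]
      intro s t
      rw [Real.dist_eq, Real.dist_eq]
      have hcoe : (Real.toNNReal (2 * R) : ℝ) = 2 * R := Real.coe_toNNReal _ (by linarith)
      rw [hcoe]
      rcases le_total s t with h | h
      · rw [abs_of_nonpos (by linarith [hmono h]), abs_of_nonpos (by linarith)]
        have := hlip s t h
        nlinarith
      · rw [abs_of_nonneg (by linarith [hmono h]), abs_of_nonneg (by linarith)]
        have := hlip t s h
        nlinarith
    exact this.continuous
  have hga : g (-(R + 1)) = 0 := by
    have : S ∩ {x : Plane | x 0 < -(R + 1)} = ∅ := by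
      ext x
      simp only [Set.mem_inter_iff, Set.mem_setOf_eq, Set.mem_empty_iff_false, iff_false,
        not_and]
      intro hxS
      have h1 : |x 0| ≤ R := le_trans (abs_coord_le_norm' x 0)
        (by have := hsub hxS; rwa [Metric.mem_closedBall, dist_zero_right] at this)
      have := (abs_le.1 h1).1
      linarith
    rw [hg]; simp only [this, measure_empty, ENNReal.toReal_zero]
  have hgb : g (R + 1) = (volume S).toReal := by
    have : S ∩ {x : Plane | x 0 < R + 1} = S := by
      apply Set.inter_eq_self_of_subset_left
      intro x hxS
      have h1 : |x 0| ≤ R := le_trans (abs_coord_le_norm' x 0)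
        (by have := hsub hxS; rwa [Metric.mem_closedBall, dist_zero_right] at this)
      have := (abs_le.1 h1).2
      simp only [Set.mem_setOf_eq]
      linarith
    rw [hg]; simp only [this]
  have hab : -(R + 1) ≤ R + 1 := by linarith
  have hc : c ∈ Set.Icc (g (-(R + 1))) (g (R + 1)) := by
    rw [hga, hgb]; exact ⟨hc0, hc1⟩
  obtain ⟨t, _, hgt⟩ := intermediate_value_Icc hab hcont.continuousOn hc
  refine ⟨S ∩ {x : Plane | x 0 < t}, hms.inter (hmt t), Set.inter_subset_left, ?_⟩
  rw [← hgt, hg]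
  simp only
  rw [ENNReal.ofReal_toReal (hfin t)]


lemma exists_disjoint_family (k : ℕ) :
    ∀ (S : Set Plane), MeasurableSet S → ∀ R : ℝ, 0 ≤ R → S ⊆ Metric.closedBall 0 R →
    ∀ w : Fin k → ℝ, (∀ i, 0 ≤ w i) → ENNReal.ofReal (∑ i, w i) = volume S →
    ∃ A : Fin k → Set Plane, (∀ i, MeasurableSet (A i)) ∧ (∀ i, A i ⊆ S) ∧
      (∀ i, volume (A i) = ENNReal.ofReal (w i)) ∧
      Pairwise (Function.onFun Disjoint A) := by
  induction k with
  | zero =>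
    intro S _ R _ _ w _ _
    exact ⟨fun i => i.elim0, fun i => i.elim0, fun i => i.elim0, fun i => i.elim0,
      fun i => i.elim0⟩
  | succ n ih =>
    intro S hms R hR hsub w hw hsum
    have hsum_nonneg : 0 ≤ ∑ i, w i := Finset.sum_nonneg fun i _ => hw i
    have htail_nonneg : 0 ≤ ∑ i : Fin n, w i.succ :=
      Finset.sum_nonneg fun i _ => hw i.succ
    have h0 : w 0 ≤ (volume S).toReal := by
      rw [← hsum, ENNReal.toReal_ofReal hsum_nonneg, Fin.sum_univ_succ]
      linarith
    obtain ⟨U, hUm, hUS, hUvol⟩ := exists_subset_volume_eq hms hR hsub (hw 0) h0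
    have hms' : MeasurableSet (S \ U) := hms.diff hUm
    have hsub' : S \ U ⊆ Metric.closedBall 0 R := fun x hx => hsub hx.1
    have hvolS' : ENNReal.ofReal (∑ i : Fin n, w i.succ) = volume (S \ U) := by
      rw [measure_diff hUS hUm.nullMeasurableSet (by rw [hUvol]; exact ENNReal.ofReal_ne_top),
        hUvol, ← hsum, Fin.sum_univ_succ, ENNReal.ofReal_add (hw 0) htail_nonneg,
        ENNReal.add_sub_cancel_left ENNReal.ofReal_ne_top]
    obtain ⟨A', hA'm, hA'S, hA'vol, hA'disj⟩ :=
      ih (S \ U) hms' R hR hsub' (fun i => w i.succ) (fun i => hw i.succ) hvolS'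
    have hdisjU : ∀ i, Disjoint U (A' i) := fun i =>
      Set.disjoint_of_subset_right (hA'S i) Set.disjoint_sdiff_right
    refine ⟨Fin.cases U A', ?_, ?_, ?_, ?_⟩
    · intro i
      rcases Fin.eq_zero_or_eq_succ i with rfl | ⟨i', rfl⟩
      · simpa using hUm
      · simpa using hA'm i'
    · intro i
      rcases Fin.eq_zero_or_eq_succ i with rfl | ⟨i', rfl⟩
      · simpa using hUS
      · simpa using (hA'S i').trans Set.diff_subset
    · intro i
      rcases Fin.eq_zero_or_eq_succ i with rfl | ⟨i', rfl⟩
      · simpa using hUvol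
      · simpa using hA'vol i'
    · intro i j hij
      rcases Fin.eq_zero_or_eq_succ i with rfl | ⟨i', rfl⟩ <;>
        rcases Fin.eq_zero_or_eq_succ j with rfl | ⟨j', rfl⟩
      · exact absurd rfl hij
      · simpa [Function.onFun] using hdisjU j'
      · simpa [Function.onFun] using (hdisjU i').symm
      · have : i' ≠ j' := fun h => hij (by rw [h])
        simpa [Function.onFun] using hA'disj this

def combineMap (d : Plane) {k : ℕ} (u : Fin k → Set Plane) (p : Fin k → Plane) :
    Plane → Plane :=
  fun x => d + ∑ i, Set.indicator (u i) (fun _ => p i - d) x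

lemma measurable_combineMap (d : Plane) {k : ℕ} (u : Fin k → Set Plane) (p : Fin k → Plane)
    (hu : ∀ i, MeasurableSet (u i)) : Measurable (combineMap d u p) :=
  measurable_const.add <|
    Finset.measurable_sum _ fun i _ => Measurable.indicator measurable_const (hu i)

lemma combineMap_mem (d : Plane) {k : ℕ} {u : Fin k → Set Plane} (p : Fin k → Plane)
    (hdisj : Pairwise (Function.onFun Disjoint u)) {x : Plane} {j : Fin k} (hx : x ∈ u j) :
    combineMap d u p x = p j := by
  unfold combineMap
  rw [Finset.sum_eq_single j]
  · rw [Set.indicator_of_mem hx]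
    abel
  · intro i _ hij
    exact Set.indicator_of_notMem
      (fun hxi => (Set.disjoint_left.1 (hdisj hij)) hxi hx) _
  · intro h
    exact absurd (Finset.mem_univ j) h

lemma combineMap_notmem (d : Plane) {k : ℕ} {u : Fin k → Set Plane} (p : Fin k → Plane)
    {x : Plane} (hx : ∀ i, x ∉ u i) : combineMap d u p x = d := by
  unfold combineMap
  rw [Finset.sum_eq_zero fun i _ => Set.indicator_of_notMem (hx i) _]
  abel

lemma finset_enum (Z : Finset Plane) :
    ∃ e : Fin Z.card → Plane, Function.Injective e ∧ (∀ i, e i ∈ Z) ∧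
      (∀ z ∈ Z, ∃ i, e i = z) ∧ ∀ f : Plane → ℝ, ∑ i, f (e i) = ∑ z ∈ Z, f z := by
  refine ⟨fun i => (Z.equivFin.symm i : Plane), ?_, fun i => (Z.equivFin.symm i).2, ?_, ?_⟩
  · intro i j h
    exact Z.equivFin.symm.injective (Subtype.coe_injective h)
  · intro z hz
    exact ⟨Z.equivFin ⟨z, hz⟩, by simp⟩
  · intro f
    rw [← Finset.sum_coe_sort Z f]
    exact Equiv.sum_comp Z.equivFin.symm (fun x => f (x : Plane))

lemma exists_transport {lam : ℝ} (hlam : 0 < lam) {Om : Set Plane} (hms : MeasurableSet Om)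
    {R : ℝ} (hR : 0 ≤ R) (hsub : Om ⊆ Metric.closedBall 0 R)
    (hvol : volume Om = ENNReal.ofReal (Vlam lam))
    {Z : Finset Plane} {v : Plane → ℝ} (hadm : Admissible lam Om Z v) :
    ∃ T, IsTransportMap Om Z v T := by
  obtain ⟨hZ, hv, hsum⟩ := hadm
  have hZne : Z.Nonempty := by
    rcases Z.eq_empty_or_nonempty with rfl | h
    · exfalso
      rw [Finset.sum_empty] at hsum
      exact absurd hsum.symm (ne_of_gt (Vlam_pos hlam))
    · exact h
  obtain ⟨e, he_inj, he_mem, he_surj, he_sum⟩ := finset_enum Z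
  have hkpos : 0 < Z.card := Finset.card_pos.2 hZne
  have hw : ∀ i : Fin Z.card, 0 ≤ v (e i) := fun i => (hv _ (he_mem i)).le
  have hsumw : ENNReal.ofReal (∑ i, v (e i)) = volume Om := by
    rw [he_sum, hsum, hvol]
  obtain ⟨A, hAm, hAS, hAvol, hAdisj⟩ :=
    exists_disjoint_family Z.card Om hms R hR hsub _ hw hsumw
  set i0 : Fin Z.card := ⟨0, hkpos⟩
  set d := e i0 with hd
  set T := combineMap d A e with hT
  have hOmfin : volume Om ≠ ⊤ := by rw [hvol]; exact ENNReal.ofReal_ne_top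
  have hN : volume (Om \ ⋃ i, A i) = 0 := by
    have hUsub : (⋃ i, A i) ⊆ Om := Set.iUnion_subset hAS
    have hUvol : volume (⋃ i, A i) = volume Om := by
      rw [measure_iUnion hAdisj hAm, tsum_fintype, ← hsumw]
      simp only [hAvol]
      exact (ENNReal.ofReal_sum_of_nonneg (fun i _ => hw i)).symm
    rw [measure_diff hUsub (MeasurableSet.iUnion hAm).nullMeasurableSet
      (by rw [hUvol]; exact hOmfin), hUvol, tsub_self]
  refine ⟨T, measurable_combineMap _ _ _ hAm, ?_, ?_⟩
  · intro x hx
    by_cases h : ∃ i, x ∈ A i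
    · obtain ⟨i, hi⟩ := h
      rw [hT, combineMap_mem d e hAdisj hi]
      exact he_mem i
    · push_neg at h
      rw [hT, combineMap_notmem d e h]
      exact he_mem i0
  · intro z hz
    obtain ⟨j, rfl⟩ := he_surj z hz
    by_cases hj0 : j = i0
    · have hset : {x | x ∈ Om ∧ T x = e j} = A j ∪ (Om \ ⋃ i, A i) := by
        ext x
        constructor
        · rintro ⟨hxOm, hTx⟩
          by_cases h : ∃ i, x ∈ A i
          · obtain ⟨i, hi⟩ := h
            have hei : e i = e j := by rw [← combineMap_mem d e hAdisj hi]; exact hTx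
            exact Or.inl (he_inj hei ▸ hi)
          · push_neg at h
            exact Or.inr ⟨hxOm, by simpa using h⟩
        · rintro (hx | ⟨hxOm, hxN⟩)
          · exact ⟨hAS j hx, combineMap_mem d e hAdisj hx⟩
          · have h' : ∀ i, x ∉ A i := by simpa using hxN
            refine ⟨hxOm, ?_⟩
            rw [hT, combineMap_notmem d e h', hd, hj0]
      have hAN : volume (A j ∪ (Om \ ⋃ i, A i)) = volume (A j) :=
        le_antisymm ((measure_union_le _ _).trans (by rw [hN, add_zero]))
          (measure_mono Set.subset_union_left)
      rw [hset, hAN, hAvol, ENNReal.toReal_ofReal (hw j)]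
    · have hset : {x | x ∈ Om ∧ T x = e j} = A j := by
        ext x
        constructor
        · rintro ⟨hxOm, hTx⟩
          by_cases h : ∃ i, x ∈ A i
          · obtain ⟨i, hi⟩ := h
            have hei : e i = e j := by rw [← combineMap_mem d e hAdisj hi]; exact hTx
            exact he_inj hei ▸ hi
          · push_neg at h
            rw [show T x = d from combineMap_notmem d e h] at hTx
            exact absurd (he_inj hTx).symm hj0
        · intro hx
          exact ⟨hAS j hx, combineMap_mem d e hAdisj hx⟩
      rw [hset, hAvol, ENNReal.toReal_ofReal (hw j)]

/-- The partition-energy set associated to `Om`. -/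
def partSet (Om : Set Plane) : Set ℝ :=
  {e : ℝ | ∃ (n : ℕ) (s : Fin n → Set Plane),
    (∀ i, MeasurableSet (s i)) ∧
    (∀ᵐ x ∂(volume.restrict Om), ∃! i, x ∈ s i) ∧
    e = ∑ i : Fin n,
      (2 * c6 * Real.sqrt ((volume (s i ∩ Om)).toReal) +
        sInf {I : ℝ | ∃ xi ∈ Om, I = ∫ x in s i ∩ Om, ‖x - xi‖ ^ 2})}

lemma partSet_nonneg {Om : Set Plane} {e : ℝ} (he : e ∈ partSet Om) : 0 ≤ e := by
  obtain ⟨n, s, _, _, rfl⟩ := he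
  apply Finset.sum_nonneg
  intro i _
  have h1 : 0 ≤ 2 * c6 * Real.sqrt ((volume (s i ∩ Om)).toReal) := by
    have := c6_pos
    positivity
  have h2 : 0 ≤ sInf {I : ℝ | ∃ xi ∈ Om, I = ∫ x in s i ∩ Om, ‖x - xi‖ ^ 2} := by
    apply Real.sInf_nonneg
    rintro I ⟨xi, _, rfl⟩
    exact integral_nonneg fun x => by positivity
  linarith

lemma bddBelow_partSet (Om : Set Plane) : BddBelow (partSet Om) :=
  ⟨0, fun e he => partSet_nonneg he⟩

lemma dirA {lam : ℝ} (hlam : 0 < lam) {Om : Set Plane} (hms : MeasurableSet Om)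
    {R : ℝ} (hR : 0 ≤ R) (hsub : Om ⊆ Metric.closedBall 0 R)
    (hvol : volume Om = ENNReal.ofReal (Vlam lam))
    {Z : Finset Plane} {v : Plane → ℝ} (hadm : Admissible lam Om Z v) :
    sInf (partSet Om) ≤ energy Om Z v := by
  obtain ⟨hZ, hv, hsum⟩ := hadm
  have hOmfin : volume Om ≠ ⊤ := by rw [hvol]; exact ENNReal.ofReal_ne_top
  -- the cost set
  set C := {c : ℝ | ∃ T : Plane → Plane, IsTransportMap Om Z v T ∧
    c = ∫ x in Om, ‖x - T x‖ ^ 2} with hC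
  have hCne : C.Nonempty := by
    obtain ⟨T, hT⟩ := exists_transport hlam hms hR hsub hvol ⟨hZ, hv, hsum⟩
    exact ⟨_, T, hT, rfl⟩
  -- main claim: for every c ∈ C, sInf (partSet Om) ≤ 2c₆ Σ √v + c
  have hmain : ∀ c ∈ C, sInf (partSet Om) ≤ 2 * c6 * ∑ z ∈ Z, Real.sqrt (v z) + c := by
    rintro c ⟨T, ⟨hTm, hTmem, hTvol⟩, rfl⟩
    obtain ⟨e, he_inj, he_mem, he_surj, he_sum⟩ := finset_enum Z
    set s : Fin Z.card → Set Plane := fun i => T ⁻¹' {e i} with hs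
    have hsm : ∀ i, MeasurableSet (s i) := fun i => hTm (measurableSet_singleton _)
    have hinter : ∀ i, s i ∩ Om = {x | x ∈ Om ∧ T x = e i} := by
      intro i
      ext x
      simp only [hs, Set.mem_inter_iff, Set.mem_preimage, Set.mem_singleton_iff,
        Set.mem_setOf_eq]
      tauto
    have hae : ∀ᵐ x ∂(volume.restrict Om), ∃! i, x ∈ s i := by
      filter_upwards [ae_restrict_mem hms] with x hx
      obtain ⟨i, hi⟩ := he_surj (T x) (hTmem x hx)
      refine ⟨i, hi.symm, ?_⟩
      intro j hj
      exact he_inj (by rw [hi]; exact hj.symm)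
    -- the element of partSet
    have hmem : (∑ i : Fin Z.card,
        (2 * c6 * Real.sqrt ((volume (s i ∩ Om)).toReal) +
          sInf {I : ℝ | ∃ xi ∈ Om, I = ∫ x in s i ∩ Om, ‖x - xi‖ ^ 2})) ∈ partSet Om :=
      ⟨Z.card, s, hsm, hae, rfl⟩
    refine (csInf_le (bddBelow_partSet Om) hmem).trans ?_
    -- compare the two sums
    have hval : ∀ i, (volume (s i ∩ Om)).toReal = v (e i) := by
      intro i
      rw [hinter i]
      exact hTvol _ (he_mem i)
    -- integrability of the cost on each piece
    have hint : ∀ i, IntegrableOn (fun x => ‖x - T x‖ ^ 2) (s i ∩ Om) := by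
      intro i
      refine Measure.integrableOn_of_bounded (M := (2 * R) ^ 2)
        (ne_top_of_le_ne_top hOmfin (measure_mono Set.inter_subset_right))
        (((measurable_id.sub hTm).norm.pow_const 2).aestronglyMeasurable) ?_
      filter_upwards [ae_restrict_mem ((hsm i).inter hms)] with x hx
      have hxOm : x ∈ Om := hx.2
      have hxR : ‖x‖ ≤ R := by
        have := hsub hxOm; rwa [Metric.mem_closedBall, dist_zero_right] at this
      have hTxR : ‖T x‖ ≤ R := by
        have := hsub (hZ (hTmem x hxOm))
        rwa [Metric.mem_closedBall, dist_zero_right] at this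
      have h1 : ‖x - T x‖ ≤ 2 * R := by
        calc ‖x - T x‖ ≤ ‖x‖ + ‖T x‖ := norm_sub_le _ _
          _ ≤ 2 * R := by linarith
      have h2 : (0:ℝ) ≤ ‖x - T x‖ := norm_nonneg _
      rw [Real.norm_eq_abs, abs_of_nonneg (by positivity)]
      nlinarith
    -- decomposition of the cost integral
    have hcover : Om = ⋃ i ∈ Finset.univ, (s i ∩ Om) := by
      ext x
      simp only [Set.mem_iUnion, Set.mem_inter_iff, Finset.mem_univ, Set.mem_preimage,
        Set.mem_singleton_iff, exists_prop, true_and, hs]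
      constructor
      · intro hx
        obtain ⟨i, hi⟩ := he_surj (T x) (hTmem x hx)
        exact ⟨i, hi.symm, hx⟩
      · rintro ⟨i, _, hx⟩
        exact hx
    have hdisj : ((Finset.univ : Finset (Fin Z.card)) : Set (Fin Z.card)).Pairwise
        (Function.onFun Disjoint (fun i => s i ∩ Om)) := by
      intro i _ j _ hij
      refine Set.disjoint_left.2 ?_
      rintro x ⟨hxi, _⟩ ⟨hxj, _⟩
      have h1 : T x = e i := hxi
      have h2 : T x = e j := hxj
      exact hij (he_inj (h1.symm.trans h2))
    have hcost : ∫ x in Om, ‖x - T x‖ ^ 2 =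
        ∑ i : Fin Z.card, ∫ x in s i ∩ Om, ‖x - T x‖ ^ 2 := by
      conv_lhs => rw [hcover]
      exact integral_biUnion_finset Finset.univ (fun i _ => (hsm i).inter hms) hdisj
        (fun i _ => hint i)
    have hpiece : ∀ i, ∫ x in s i ∩ Om, ‖x - T x‖ ^ 2 = ∫ x in s i ∩ Om, ‖x - e i‖ ^ 2 := by
      intro i
      apply setIntegral_congr_fun ((hsm i).inter hms)
      intro x hx
      have hTx : T x = e i := hx.1
      show ‖x - T x‖ ^ 2 = ‖x - e i‖ ^ 2
      rw [hTx]
    rw [hcost]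
    rw [← he_sum (fun z => Real.sqrt (v z)), Finset.mul_sum, ← Finset.sum_add_distrib]
    apply Finset.sum_le_sum
    intro i _
    rw [hval i]
    gcongr
    rw [hpiece i]
    exact csInf_le ⟨0, by rintro I ⟨xi, _, rfl⟩; exact integral_nonneg fun x => by positivity⟩
      ⟨e i, hZ (he_mem i), rfl⟩
  -- conclude
  have : sInf (partSet Om) - 2 * c6 * ∑ z ∈ Z, Real.sqrt (v z) ≤ transportCost Om Z v := by
    apply le_csInf hCne
    intro c hc
    linarith [hmain c hc]
  unfold energy
  linarith

lemma energy_nonneg (Om : Set Plane) (Z : Finset Plane) (v : Plane → ℝ)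
    (hv : ∀ z ∈ Z, 0 < v z) : 0 ≤ energy Om Z v := by
  have h1 : 0 ≤ 2 * c6 * ∑ z ∈ Z, Real.sqrt (v z) := by
    have hc := c6_pos
    have : 0 ≤ ∑ z ∈ Z, Real.sqrt (v z) :=
      Finset.sum_nonneg fun z _ => Real.sqrt_nonneg _
    positivity
  have h2 : 0 ≤ transportCost Om Z v := by
    apply Real.sInf_nonneg
    rintro c ⟨T, _, rfl⟩
    exact integral_nonneg fun x => by positivity
  unfold energy; linarith

lemma bddBelow_enSet (lam : ℝ) (Om : Set Plane) :
    BddBelow {e : ℝ | ∃ (Z : Finset Plane) (v : Plane → ℝ),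
      Admissible lam Om Z v ∧ e = energy Om Z v} := by
  refine ⟨0, ?_⟩
  rintro e ⟨Z, v, ⟨_, hv, _⟩, rfl⟩
  exact energy_nonneg Om Z v hv

lemma dirB {lam : ℝ} (hlam : 0 < lam) {Om : Set Plane} (hms : MeasurableSet Om)
    {R : ℝ} (hR : 0 ≤ R) (hsub : Om ⊆ Metric.closedBall 0 R)
    (hvol : volume Om = ENNReal.ofReal (Vlam lam))
    (n : ℕ) (s : Fin n → Set Plane) (hsmeas : ∀ i, MeasurableSet (s i))
    (hae : ∀ᵐ x ∂(volume.restrict Om), ∃! i, x ∈ s i) :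
    infEnergy lam Om ≤ ∑ i : Fin n,
      (2 * c6 * Real.sqrt ((volume (s i ∩ Om)).toReal) +
        sInf {I : ℝ | ∃ xi ∈ Om, I = ∫ x in s i ∩ Om, ‖x - xi‖ ^ 2}) := by
  have hVpos : 0 < Vlam lam := Vlam_pos hlam
  have hOmfin : volume Om ≠ ⊤ := by rw [hvol]; exact ENNReal.ofReal_ne_top
  have hOmne : Om.Nonempty := by
    rcases Set.eq_empty_or_nonempty Om with rfl | h
    · exfalso
      rw [measure_empty] at hvol
      exact absurd hvol.symm (by simp [ENNReal.ofReal_eq_zero]; linarith)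
    · exact h
  set t : Fin n → Set Plane := fun i => s i ∩ Om with ht
  have htm : ∀ i, MeasurableSet (t i) := fun i => (hsmeas i).inter hms
  have htsub : ∀ i, t i ⊆ Om := fun i => Set.inter_subset_right
  have htfin : ∀ i, volume (t i) ≠ ⊤ :=
    fun i => ne_top_of_le_ne_top hOmfin (measure_mono (htsub i))
  set m : Fin n → ℝ := fun i => (volume (t i)).toReal with hm
  have hm0 : ∀ i, 0 ≤ m i := fun i => ENNReal.toReal_nonneg
  have htvol : ∀ i, volume (t i) = ENNReal.ofReal (m i) :=
    fun i => (ENNReal.ofReal_toReal (htfin i)).symm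
  -- the bad set is restrict-null
  have hbad : (volume.restrict Om) {x | ¬ ∃! i, x ∈ s i} = 0 := by
    exact ae_iff.1 hae
  have hsubnull : ∀ (A : Set Plane), A ⊆ Om → A ⊆ {x | ¬ ∃! i, x ∈ s i} →
      MeasurableSet A → volume A = 0 := by
    intro A hAOm hAbad hAm
    have h1 : (volume.restrict Om) A = 0 := measure_mono_null hAbad hbad
    rwa [Measure.restrict_apply hAm, Set.inter_eq_self_of_subset_left hAOm] at h1
  have hpair : ∀ i j, i ≠ j → volume (t i ∩ t j) = 0 := by
    intro i j hij
    apply hsubnull _ (fun x hx => hx.1.2) _ ((htm i).inter (htm j))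
    rintro x ⟨⟨hxi, hxOm⟩, ⟨hxj, _⟩⟩
    rintro ⟨k, hk, huniq⟩
    exact hij ((huniq i hxi).symm ▸ (huniq j hxj).symm ▸ rfl)
  have hcoverN : volume (Om \ ⋃ i, t i) = 0 := by
    apply hsubnull _ Set.diff_subset _ (hms.diff (MeasurableSet.iUnion htm))
    rintro x ⟨hxOm, hxN⟩
    rintro ⟨k, hk, _⟩
    exact hxN (Set.mem_iUnion.2 ⟨k, hk, hxOm⟩)
  -- total mass
  have hvolsum : ∑ i, volume (t i) = volume Om := by
    have hU : volume (⋃ i, t i) = ∑ i, volume (t i) := by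
      rw [measure_iUnion₀ ?_ (fun i => (htm i).nullMeasurableSet), tsum_fintype]
      intro i j hij
      exact hpair i j hij
    have hle : volume Om ≤ volume (⋃ i, t i) := by
      calc volume Om ≤ volume ((⋃ i, t i) ∪ (Om \ ⋃ i, t i)) :=
            measure_mono (fun x hx => by
              by_cases h : x ∈ ⋃ i, t i
              · exact Or.inl h
              · exact Or.inr ⟨hx, h⟩)
        _ ≤ volume (⋃ i, t i) + volume (Om \ ⋃ i, t i) := measure_union_le _ _
        _ = volume (⋃ i, t i) := by rw [hcoverN, add_zero]
    have hge : volume (⋃ i, t i) ≤ volume Om :=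
      measure_mono (Set.iUnion_subset htsub)
    rw [← hU]
    exact le_antisymm hge hle
  have hmsum : ∑ i, m i = Vlam lam := by
    have := congrArg ENNReal.toReal hvolsum
    rwa [ENNReal.toReal_sum (fun i _ => htfin i), hvol, ENNReal.toReal_ofReal hVpos.le]
      at this
  -- the good indices
  set good : Finset (Fin n) := Finset.univ.filter (fun i => 0 < m i) with hgood
  have hgoodsum : ∑ i ∈ good, m i = Vlam lam := by
    rw [← hmsum]
    rw [← Finset.sum_filter_add_sum_filter_not Finset.univ (fun i => 0 < m i) m]
    have : ∑ i ∈ Finset.univ.filter (fun i => ¬ 0 < m i), m i = 0 := by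
      apply Finset.sum_eq_zero
      intro i hi
      have := Finset.mem_filter.1 hi
      linarith [hm0 i, not_lt.1 this.2]
    rw [hgood, this, add_zero]
  have hgoodne : good.Nonempty := by
    by_contra h
    rw [Finset.not_nonempty_iff_eq_empty] at h
    rw [h, Finset.sum_empty] at hgoodsum
    linarith
  obtain ⟨istar, histar⟩ := hgoodne
  have histar' : 0 < m istar := (Finset.mem_filter.1 histar).2
  -- the W values
  set W : Fin n → ℝ := fun i => sInf {I : ℝ | ∃ xi ∈ Om, I = ∫ x in t i, ‖x - xi‖ ^ 2}
    with hW
  have hWne : ∀ i, {I : ℝ | ∃ xi ∈ Om, I = ∫ x in t i, ‖x - xi‖ ^ 2}.Nonempty := by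
    intro i
    obtain ⟨y, hy⟩ := hOmne
    exact ⟨_, y, hy, rfl⟩
  have hW0 : ∀ i, 0 ≤ W i := by
    intro i
    apply Real.sInf_nonneg
    rintro I ⟨xi, _, rfl⟩
    exact integral_nonneg fun x => by positivity
  -- conclude via epsilon
  apply le_of_forall_pos_le_add
  intro ε hε
  set ε' : ℝ := ε / (n + 1) with hε'
  have hε'pos : 0 < ε' := by positivity
  -- choose near-optimal points
  have hchoose : ∀ i : Fin n, ∃ xi ∈ Om, (∫ x in t i, ‖x - xi‖ ^ 2) < W i + ε' := by
    intro i
    obtain ⟨I, ⟨xi, hxi, rfl⟩, hI⟩ := Real.lt_sInf_add_pos (hWne i) hε'pos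
    exact ⟨xi, hxi, hI⟩
  choose xi hxiOm hxiI using hchoose
  -- exactly disjoint pieces
  set u : Fin n → Set Plane := fun i =>
    if 0 < m i then t i \ ⋃ j ∈ Finset.univ.filter (fun j => j < i), t j else ∅ with hu
  have hum : ∀ i, MeasurableSet (u i) := by
    intro i
    rw [hu]
    by_cases h : 0 < m i
    · simp only [if_pos h]
      exact (htm i).diff (Finset.measurableSet_biUnion _ (fun j _ => htm j))
    · simp only [if_neg h]
      exact MeasurableSet.empty
  have husub : ∀ i, u i ⊆ t i := by
    intro i
    rw [hu]
    by_cases h : 0 < m i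
    · simp only [if_pos h]; exact Set.diff_subset
    · simp only [if_neg h]; exact Set.empty_subset _
  have hudisj : Pairwise (Function.onFun Disjoint u) := by
    intro i j hij
    rcases lt_or_gt_of_ne hij with h | h
    · -- i < j : u j avoids t i ⊇ u i
      refine Set.disjoint_left.2 ?_
      intro x hxi hxj
      have hxti : x ∈ t i := husub i hxi
      rw [hu] at hxj
      by_cases hmj : 0 < m j
      · simp only [if_pos hmj] at hxj
        exact hxj.2 (Set.mem_biUnion (Finset.mem_coe.2
          (Finset.mem_filter.2 ⟨Finset.mem_univ i, h⟩)) hxti)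
      · simp only [if_neg hmj] at hxj
        exact hxj
    · refine Set.disjoint_left.2 ?_
      intro x hxi hxj
      have hxtj : x ∈ t j := husub j hxj
      rw [hu] at hxi
      by_cases hmi : 0 < m i
      · simp only [if_pos hmi] at hxi
        exact hxi.2 (Set.mem_biUnion (Finset.mem_coe.2
          (Finset.mem_filter.2 ⟨Finset.mem_univ j, h⟩)) hxtj)
      · simp only [if_neg hmi] at hxi
        exact hxi
  have huvol : ∀ i ∈ good, volume (u i) = volume (t i) := by
    intro i hi
    have hmi : 0 < m i := (Finset.mem_filter.1 hi).2
    rw [hu]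
    simp only [if_pos hmi]
    apply measure_diff_null'
    have hsub2 : t i ∩ ⋃ j ∈ Finset.univ.filter (fun j => j < i), t j ⊆
        ⋃ j ∈ Finset.univ.filter (fun j => j < i), (t i ∩ t j) := by
      rintro x ⟨hxi, hxU⟩
      obtain ⟨j, hj, hxj⟩ := Set.mem_iUnion₂.1 hxU
      exact Set.mem_iUnion₂.2 ⟨j, hj, hxi, hxj⟩
    refine measure_mono_null hsub2 ?_
    refine le_antisymm ?_ (by simp)
    refine (measure_biUnion_finset_le _ _).trans ?_
    refine le_of_eq (Finset.sum_eq_zero ?_)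
    intro j hj
    exact hpair i j (ne_of_gt (Finset.mem_filter.1 hj).2)
  have huvol0 : ∀ i, i ∉ good → volume (u i) = 0 := by
    intro i hi
    have hmi : ¬ 0 < m i := fun h => hi (Finset.mem_filter.2 ⟨Finset.mem_univ i, h⟩)
    rw [hu]
    simp only [if_neg hmi]
    exact measure_empty
  -- the union of good pieces fills Om
  have hUvol : volume (⋃ i ∈ good, u i) = volume Om := by
    rw [measure_biUnion_finset (hudisj.set_pairwise _) (fun i _ => hum i)]
    calc ∑ i ∈ good, volume (u i) = ∑ i ∈ good, volume (t i) :=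
          Finset.sum_congr rfl huvol
      _ = ∑ i, volume (t i) := by
          refine Finset.sum_subset (Finset.subset_univ good) ?_
          intro i _ hi
          have hmi : m i = 0 := le_antisymm
            (not_lt.1 fun h => hi (Finset.mem_filter.2 ⟨Finset.mem_univ i, h⟩)) (hm0 i)
          rw [htvol i, hmi, ENNReal.ofReal_zero]
      _ = volume Om := hvolsum
  have hUsub' : (⋃ i ∈ good, u i) ⊆ Om :=
    Set.iUnion₂_subset fun i _ => (husub i).trans (htsub i)
  have hRnull : volume (Om \ ⋃ i ∈ good, u i) = 0 := by
    rw [measure_diff hUsub' (Finset.measurableSet_biUnion _ fun i _ => hum i).nullMeasurableSet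
      (by rw [hUvol]; exact hOmfin), hUvol, tsub_self]
  classical
  -- atoms and weights
  set Z : Finset Plane := good.image xi with hZ
  set v : Plane → ℝ := fun z => ∑ i ∈ good.filter (fun i => xi i = z), m i with hv
  have hvnn : ∀ z, 0 ≤ v z := fun z => Finset.sum_nonneg fun i _ => hm0 i
  have hZOm : (↑Z : Set Plane) ⊆ Om := by
    intro z hz
    obtain ⟨i, hi, rfl⟩ := Finset.mem_image.1 (Finset.mem_coe.1 hz)
    exact hxiOm i
  have hvpos : ∀ z ∈ Z, 0 < v z := by
    intro z hz
    obtain ⟨i, hi, rfl⟩ := Finset.mem_image.1 hz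
    apply Finset.sum_pos' (fun j _ => hm0 j)
    exact ⟨i, Finset.mem_filter.2 ⟨hi, rfl⟩, (Finset.mem_filter.1 hi).2⟩
  have hvsum : ∑ z ∈ Z, v z = Vlam lam := by
    simp only [hv, hZ]
    rw [Finset.sum_fiberwise_of_maps_to (fun i hi => Finset.mem_image_of_mem xi hi) m]
    exact hgoodsum
  -- the transport map
  set d : Plane := xi istar with hd
  set T : Plane → Plane := combineMap d u xi with hT
  have hnotgood : ∀ i, i ∉ good → u i = ∅ := by
    intro i hi
    have hmi : ¬ 0 < m i := fun hh => hi (Finset.mem_filter.2 ⟨Finset.mem_univ i, hh⟩)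
    rw [hu]
    simp only [if_neg hmi]
  have hTmem : ∀ x ∈ Om, T x ∈ Z := by
    intro x hx
    by_cases h : ∃ i, x ∈ u i
    · obtain ⟨i, hi⟩ := h
      rw [hT, combineMap_mem d xi hudisj hi]
      have hgi : i ∈ good := by
        by_contra hgi
        rw [hnotgood i hgi] at hi
        exact hi
      exact Finset.mem_image_of_mem xi hgi
    · push_neg at h
      rw [hT, combineMap_notmem d xi h]
      exact Finset.mem_image_of_mem xi histar
  have hTvol : ∀ z ∈ Z, (volume {x | x ∈ Om ∧ T x = z}).toReal = v z := by
    intro z hz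
    set F := good.filter (fun i => xi i = z) with hF
    have hUF : volume (⋃ i ∈ F, u i) = ENNReal.ofReal (v z) := by
      rw [measure_biUnion_finset (hudisj.set_pairwise _) (fun i _ => hum i)]
      rw [hv]
      rw [ENNReal.ofReal_sum_of_nonneg (fun i _ => hm0 i)]
      apply Finset.sum_congr rfl
      intro i hi
      rw [huvol i (Finset.mem_filter.1 hi).1, htvol i]
    have hforward : ∀ x, x ∈ Om → T x = z → x ∈ (⋃ i ∈ F, u i) ∪ (Om \ ⋃ i ∈ good, u i) := by
      intro x hxOm hTx
      by_cases h : ∃ i, x ∈ u i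
      · obtain ⟨i, hi⟩ := h
        have hTxi : T x = xi i := combineMap_mem d xi hudisj hi
        have hgi : i ∈ good := by
          by_contra hgi
          rw [hnotgood i hgi] at hi
          exact hi
        refine Or.inl (Set.mem_biUnion ?_ hi)
        exact Finset.mem_coe.2 (Finset.mem_filter.2 ⟨hgi, by rw [← hTxi, hTx]⟩)
      · push_neg at h
        refine Or.inr ⟨hxOm, ?_⟩
        intro hU
        obtain ⟨i, _, hi⟩ := Set.mem_iUnion₂.1 hU
        exact h i hi
    have hbackF : ∀ x, x ∈ (⋃ i ∈ F, u i) → x ∈ Om ∧ T x = z := by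
      intro x hx
      obtain ⟨i, hiF, hi⟩ := Set.mem_iUnion₂.1 hx
      have hiF' := Finset.mem_filter.1 hiF
      exact ⟨(htsub i) (husub i hi),
        by rw [hT, combineMap_mem d xi hudisj hi, hiF'.2]⟩
    by_cases hzd : z = d
    · have hset : {x | x ∈ Om ∧ T x = z} = (⋃ i ∈ F, u i) ∪ (Om \ ⋃ i ∈ good, u i) := by
        ext x
        constructor
        · rintro ⟨hxOm, hTx⟩
          exact hforward x hxOm hTx
        · rintro (hx | ⟨hxOm, hxN⟩)
          · exact hbackF x hx
          · have h' : ∀ i, x ∉ u i := by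
              intro i hi
              by_cases hgi : i ∈ good
              · exact hxN (Set.mem_biUnion hgi hi)
              · rw [hnotgood i hgi] at hi
                exact hi
            exact ⟨hxOm, by rw [hT, combineMap_notmem d xi h', ← hzd]⟩
      rw [hset]
      have hvol2 : volume ((⋃ i ∈ F, u i) ∪ (Om \ ⋃ i ∈ good, u i)) = volume (⋃ i ∈ F, u i) :=
        le_antisymm ((measure_union_le _ _).trans (by rw [hRnull, add_zero]))
          (measure_mono Set.subset_union_left)
      rw [hvol2, hUF, ENNReal.toReal_ofReal (hvnn z)]
    · have hset : {x | x ∈ Om ∧ T x = z} = ⋃ i ∈ F, u i := by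
        ext x
        constructor
        · rintro ⟨hxOm, hTx⟩
          rcases hforward x hxOm hTx with hx | ⟨_, hxN⟩
          · exact hx
          · exfalso
            have h' : ∀ i, x ∉ u i := by
              intro i hi
              by_cases hgi : i ∈ good
              · exact hxN (Set.mem_biUnion hgi hi)
              · rw [hnotgood i hgi] at hi
                exact hi
            rw [hT, combineMap_notmem d xi h'] at hTx
            exact hzd hTx.symm
        · intro hx
          exact hbackF x hx
      rw [hset, hUF, ENNReal.toReal_ofReal (hvnn z)]
  have hTmap : IsTransportMap Om Z v T :=
    ⟨measurable_combineMap d u xi hum, hTmem, hTvol⟩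
  -- cost bound
  have hint_u : ∀ i, IntegrableOn (fun x => ‖x - T x‖ ^ 2) (u i) := by
    intro i
    refine Measure.integrableOn_of_bounded (M := (2 * R) ^ 2)
      (ne_top_of_le_ne_top (htfin i) (measure_mono (husub i)))
      (((measurable_id.sub (measurable_combineMap d u xi hum)).norm.pow_const
        2).aestronglyMeasurable) ?_
    filter_upwards [ae_restrict_mem (hum i)] with x hx
    have hxOm : x ∈ Om := (htsub i) (husub i hx)
    have hxR : ‖x‖ ≤ R := by
      have := hsub hxOm; rwa [Metric.mem_closedBall, dist_zero_right] at this
    have hTxR : ‖T x‖ ≤ R := by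
      have := hsub (hZOm (hTmem x hxOm))
      rwa [Metric.mem_closedBall, dist_zero_right] at this
    have h1 : ‖x - T x‖ ≤ 2 * R := by
      calc ‖x - T x‖ ≤ ‖x‖ + ‖T x‖ := norm_sub_le _ _
        _ ≤ 2 * R := by linarith
    have h2 : (0:ℝ) ≤ ‖x - T x‖ := norm_nonneg _
    rw [Real.norm_eq_abs, abs_of_nonneg (by positivity)]
    nlinarith
  have hcost_decomp : ∫ x in Om, ‖x - T x‖ ^ 2 =
      ∑ i ∈ good, ∫ x in u i, ‖x - T x‖ ^ 2 := by
    have hOm_ae : Om =ᵐ[volume] ⋃ i ∈ good, u i := by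
      rw [ae_eq_set]
      constructor
      · exact hRnull
      · rw [Set.diff_eq_empty.2 hUsub', measure_empty]
    rw [setIntegral_congr_set hOm_ae]
    exact integral_biUnion_finset good (fun i _ => hum i) (hudisj.set_pairwise _)
      (fun i _ => hint_u i)
  have hpiece : ∀ i ∈ good, ∫ x in u i, ‖x - T x‖ ^ 2 = ∫ x in u i, ‖x - xi i‖ ^ 2 := by
    intro i _
    apply setIntegral_congr_fun (hum i)
    intro x hx
    show ‖x - T x‖ ^ 2 = ‖x - xi i‖ ^ 2
    rw [show T x = xi i from combineMap_mem d xi hudisj hx]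
  have hmono_piece : ∀ i ∈ good,
      ∫ x in u i, ‖x - xi i‖ ^ 2 ≤ ∫ x in t i, ‖x - xi i‖ ^ 2 := by
    intro i _
    apply setIntegral_mono_set
      (integrableOn_q (xi i) (htm i) (htfin i) ((htsub i).trans hsub))
      (Filter.Eventually.of_forall (fun x => by positivity))
      (HasSubset.Subset.eventuallyLE (husub i))
  have hcost_le : ∫ x in Om, ‖x - T x‖ ^ 2 ≤ ∑ i, (W i + ε') := by
    rw [hcost_decomp]
    calc ∑ i ∈ good, ∫ x in u i, ‖x - T x‖ ^ 2
        ≤ ∑ i ∈ good, (W i + ε') := by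
          apply Finset.sum_le_sum
          intro i hi
          rw [hpiece i hi]
          exact (hmono_piece i hi).trans (hxiI i).le
      _ ≤ ∑ i, (W i + ε') := by
          apply Finset.sum_le_sum_of_subset_of_nonneg (Finset.subset_univ good)
          intro i _ _
          have := hW0 i
          linarith
  have htc : transportCost Om Z v ≤ ∑ i, (W i + ε') := by
    have hbdd : BddBelow {c : ℝ | ∃ T0 : Plane → Plane, IsTransportMap Om Z v T0 ∧
        c = ∫ x in Om, ‖x - T0 x‖ ^ 2} := by
      refine ⟨0, ?_⟩
      rintro c ⟨T', _, rfl⟩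
      exact integral_nonneg fun x => by positivity
    exact (csInf_le hbdd ⟨T, hTmap, rfl⟩).trans hcost_le
  have hsqrt : ∑ z ∈ Z, Real.sqrt (v z) ≤ ∑ i, Real.sqrt (m i) := by
    calc ∑ z ∈ Z, Real.sqrt (v z)
        ≤ ∑ z ∈ Z, ∑ i ∈ good.filter (fun i => xi i = z), Real.sqrt (m i) := by
          apply Finset.sum_le_sum
          intro z _
          exact sqrt_sum_le _ _ (fun i _ => hm0 i)
      _ = ∑ i ∈ good, Real.sqrt (m i) :=
          Finset.sum_fiberwise_of_maps_to (fun i hi => Finset.mem_image_of_mem xi hi) _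
      _ ≤ ∑ i, Real.sqrt (m i) :=
          Finset.sum_le_sum_of_subset_of_nonneg (Finset.subset_univ _)
            (fun i _ _ => Real.sqrt_nonneg _)
  -- assemble
  have h4 : ∑ i : Fin n, (2 * c6 * Real.sqrt (m i) + W i) =
      2 * c6 * ∑ i, Real.sqrt (m i) + ∑ i, W i := by
    rw [Finset.sum_add_distrib, Finset.mul_sum]
  have h2 : ∑ i : Fin n, (W i + ε') = ∑ i, W i + n * ε' := by
    rw [Finset.sum_add_distrib, Finset.sum_const, Finset.card_univ, Fintype.card_fin,
      nsmul_eq_mul]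
  have h3 : (n : ℝ) * ε' ≤ ε := by
    have hn1 : (0:ℝ) < (n : ℝ) + 1 := by positivity
    rw [hε']
    calc (n : ℝ) * (ε / ((n : ℝ) + 1)) = ε * ((n : ℝ) / ((n : ℝ) + 1)) := by ring
      _ ≤ ε * 1 := by
          apply mul_le_mul_of_nonneg_left _ hε.le
          rw [div_le_one hn1]
          linarith
      _ = ε := mul_one ε
  have h1 : 2 * c6 * ∑ z ∈ Z, Real.sqrt (v z) ≤ 2 * c6 * ∑ i, Real.sqrt (m i) := by
    have hc := c6_pos
    apply mul_le_mul_of_nonneg_left hsqrt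
    linarith
  have hE : energy Om Z v ≤ ∑ i : Fin n, (2 * c6 * Real.sqrt (m i) + W i) + ε := by
    unfold energy
    rw [h4]
    linarith
  calc infEnergy lam Om ≤ energy Om Z v :=
        csInf_le (bddBelow_enSet lam Om) ⟨Z, v, ⟨hZOm, hvpos, hvsum⟩, rfl⟩
    _ ≤ _ := hE



/-- **Equality of the two formulations.** For a bounded open `Ω` of unit area and `λ > 0`, the
infimum of `E_λ` over admissible atomic measures on `Ω_λ` equals the infimum of
`F_λ(𝝌) = Σᵢ [2c₆(∫ χᵢ)^(1/2) + inf_{ξ ∈ Ω_λ} ∫ |x − ξ|²χᵢ]` over finite measurable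
partitions `𝝌` of `Ω_λ`. -/
theorem inf_energy_eq_inf_partition_energy
    (lam : ℝ) (hlam : 0 < lam)
    (Omega : Set Plane) (hopen : IsOpen Omega) (hbdd : Bornology.IsBounded Omega)
    (harea : volume Omega = 1) :
    infEnergy lam (scaledDomain lam Omega) =
      sInf {e : ℝ | ∃ (n : ℕ) (s : Fin n → Set Plane),
        (∀ i, MeasurableSet (s i)) ∧
        (∀ᵐ x ∂(volume.restrict (scaledDomain lam Omega)), ∃! i, x ∈ s i) ∧
        e = ∑ i : Fin n,
          (2 * c6 * Real.sqrt ((volume (s i ∩ scaledDomain lam Omega)).toReal) +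
            sInf {I : ℝ | ∃ xi ∈ scaledDomain lam Omega,
              I = ∫ x in s i ∩ scaledDomain lam Omega, ‖x - xi‖ ^ 2})} := by
  set Om := scaledDomain lam Omega with hOm
  have hOmOpen : IsOpen Om := isOpen_scaledDomain hlam hopen
  have hmsOm : MeasurableSet Om := hOmOpen.measurableSet
  have hVpos : 0 < Vlam lam := Vlam_pos hlam
  have hvolOm : volume Om = ENNReal.ofReal (Vlam lam) := volume_scaledDomain hlam harea
  have hOmfin : volume Om ≠ ⊤ := by rw [hvolOm]; exact ENNReal.ofReal_ne_top
  have hOmne : Om.Nonempty := by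
    rcases Set.eq_empty_or_nonempty Om with h | h
    · exfalso
      rw [h, measure_empty] at hvolOm
      exact absurd hvolOm.symm (by simp [ENNReal.ofReal_eq_zero]; linarith)
    · exact h
  -- boundedness
  obtain ⟨R1, hR1⟩ := hbdd.subset_closedBall 0
  set R : ℝ := max (Real.sqrt (Vlam lam) * R1) 0 with hRdef
  have hR : 0 ≤ R := le_max_right _ _
  have hsubR : Om ⊆ Metric.closedBall 0 R := by
    rintro y ⟨x, hx, rfl⟩
    rw [Metric.mem_closedBall, dist_zero_right]
    have hx1 : ‖x‖ ≤ R1 := by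
      have := hR1 hx
      rwa [Metric.mem_closedBall, dist_zero_right] at this
    have h0 : 0 ≤ Real.sqrt (Vlam lam) := Real.sqrt_nonneg _
    calc ‖Real.sqrt (Vlam lam) • x‖ = Real.sqrt (Vlam lam) * ‖x‖ := by
          rw [norm_smul, Real.norm_eq_abs, abs_of_nonneg h0]
      _ ≤ Real.sqrt (Vlam lam) * R1 := by
          exact mul_le_mul_of_nonneg_left hx1 h0
      _ ≤ R := le_max_left _ _
  -- the two sets
  have hRHS : {e : ℝ | ∃ (n : ℕ) (s : Fin n → Set Plane),
      (∀ i, MeasurableSet (s i)) ∧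
      (∀ᵐ x ∂(volume.restrict Om), ∃! i, x ∈ s i) ∧
      e = ∑ i : Fin n,
        (2 * c6 * Real.sqrt ((volume (s i ∩ Om)).toReal) +
          sInf {I : ℝ | ∃ xi ∈ Om,
            I = ∫ x in s i ∩ Om, ‖x - xi‖ ^ 2})} = partSet Om := rfl
  rw [hRHS]
  -- nonemptiness of both sets
  have hPSne : (partSet Om).Nonempty := by
    refine ⟨_, 1, fun _ => Om, fun _ => hmsOm, ?_, rfl⟩
    filter_upwards [ae_restrict_mem hmsOm] with x hx
    exact ⟨0, hx, fun j _ => Subsingleton.elim j 0⟩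
  have hESne : {e : ℝ | ∃ (Z : Finset Plane) (v : Plane → ℝ),
      Admissible lam Om Z v ∧ e = energy Om Z v}.Nonempty := by
    obtain ⟨y0, hy0⟩ := hOmne
    refine ⟨_, {y0}, fun _ => Vlam lam, ⟨?_, ?_, ?_⟩, rfl⟩
    · intro z hz
      rw [Finset.coe_singleton, Set.mem_singleton_iff] at hz
      rw [hz]; exact hy0
    · intro z _; exact hVpos
    · rw [Finset.sum_singleton]
  apply le_antisymm
  · -- infEnergy ≤ sInf partSet
    apply le_csInf hPSne
    rintro e ⟨n, s, hsmeas, hae, rfl⟩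
    exact dirB hlam hmsOm hR hsubR hvolOm n s hsmeas hae
  · -- sInf partSet ≤ infEnergy
    apply le_csInf hESne
    rintro e ⟨Z, v, hadm, rfl⟩
    exact dirA hlam hmsOm hR hsubR hvolOm hadm
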